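/- Let (B,C) be a normal contact algebra, σ a cluster in (B,C), and a ∈ B with a ∉ σ. Then there exists b ∈ B with b ∉ σ and a ≪ b (i.e., ¬(a C b*)). -/
import Mathlib


variable {B : Type*} [BooleanAlgebra B]

/-- A contact relation on a Boolean algebra: axioms (C1)-(C4). -/
def IsContactRel (C : B → B → Prop) : Prop :=
  (∀ a, a ≠ ⊥ → C a a) ∧
  (∀ a b, C a b → a ≠ ⊥ ∧ b ≠ ⊥) ∧
  (∀ a b, C a b → C b a) ∧
  (∀ a b c, C a (b ⊔ c) ↔ C a b ∨ C a c)

/-- A normal contact relation: additionally axioms (C5) and (C6). -/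
def IsNormalContactRel (C : B → B → Prop) : Prop :=
  IsContactRel C ∧
  (∀ a b, ¬ C a b → ∃ c, ¬ C a c ∧ ¬ C b cᶜ) ∧
  (∀ a, a ≠ ⊤ → ∃ b, b ≠ ⊥ ∧ ¬ C b a)

/-- A cluster in a contact algebra: axioms (K1)-(K3). -/
def IsCluster (C : B → B → Prop) (σ : Set B) : Prop :=
  σ.Nonempty ∧
  (∀ a ∈ σ, ∀ b ∈ σ, C a b) ∧
  (∀ a b, a ⊔ b ∈ σ → a ∈ σ ∨ b ∈ σ) ∧
  (∀ a, (∀ b ∈ σ, C a b) → a ∈ σ)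

/-- An ultrafilter in a Boolean algebra, as a set. -/
def IsUltrafilterSet (u : Set B) : Prop :=
  ⊤ ∈ u ∧ ⊥ ∉ u ∧
  (∀ a b, a ∈ u → a ≤ b → b ∈ u) ∧
  (∀ a b, a ∈ u → b ∈ u → a ⊓ b ∈ u) ∧
  (∀ a : B, a ∈ u ∨ aᶜ ∈ u)

/-- If a is not in the cluster σ, then some b ∉ σ non-tangentially contains a. -/
theorem exists_not_mem_cluster_ll (C : B → B → Prop)
    (hC : IsNormalContactRel C) (σ : Set B) (hσ : IsCluster C σ)
    (a : B) (ha : a ∉ σ) :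
    ∃ b : B, b ∉ σ ∧ ¬ C a bᶜ := by
  obtain ⟨⟨_, _, hsym, _⟩, hC5, _⟩ := hC
  obtain ⟨_, hK1, _, hK3⟩ := hσ
  have : ¬ ∀ b ∈ σ, C a b := fun h => ha (hK3 a h)
  push_neg at this
  obtain ⟨b₀, hb₀σ, hab₀⟩ := this
  obtain ⟨c, hac, hb₀c⟩ := hC5 a b₀ hab₀
  refine ⟨cᶜ, fun hcσ => hb₀c (hsym _ _ (hK1 _ hcσ _ hb₀σ)), ?_⟩
  simpa using hac
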